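/- arXiv:1101.4969 — 2 statements merged into one kernel-verified Lean document; each statement's English description precedes it below -/
import Mathlib

section
/- Hölder continuity of order d for the restricted fractional process: Let d ∈ (0,1), let X be a semimartingale with X(0) = X(0−) = 0 a.s., and let M(t) = (1/Γ(d+1)) ∫₀ᵗ (t−s)^d dX(s). Then P-almost surely, for every t ∈ (0,1) there exist δ₁ > 0 and C₁ = C₁(ω) such that |M(t+δ) − M(t)| ≤ C₁|δ|^d for all δ ∈ (−δ₁, δ₁); indeed one can take any C₁ > (1/Γ(d+1)) sup_{s∈[0,1]} |Δ_X(s)|. -/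
set_option maxHeartbeats 1000000


open MeasureTheory ProbabilityTheory Filter Set intervalIntegral Real

/-- `p01 F t r = ∂F/∂r (t,r)` -/
noncomputable def p01 (F : ℝ → ℝ → ℝ) (t r : ℝ) : ℝ := deriv (fun x => F t x) r
/-- `p10 F t r = ∂F/∂t (t,r)` -/
noncomputable def p10 (F : ℝ → ℝ → ℝ) (t r : ℝ) : ℝ := deriv (fun x => F x r) t
/-- `p11 F t r = ∂²F/∂t∂r (t,r)` -/
noncomputable def p11 (F : ℝ → ℝ → ℝ) (t r : ℝ) : ℝ := deriv (fun x => p01 F x r) t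
/-- `p02 F t r = ∂²F/∂r² (t,r)` -/
noncomputable def p02 (F : ℝ → ℝ → ℝ) (t r : ℝ) : ℝ := deriv (fun x => p01 F t x) r

/-- `lim_{h↓0} sup_{t∈K} |G h t + c| = 0` for every compact `K ⊂ ℝ`. -/
def UnifDiagLimit (G : ℝ → ℝ → ℝ) (c : ℝ) : Prop :=
  ∀ K : Set ℝ, IsCompact K → ∀ ε > 0, ∃ h₀ > 0, ∀ h : ℝ, 0 < h → h < h₀ →
    ∀ t ∈ K, |G h t + c| < ε

/-- `F ∈ SR²_ρ(0+)` : a function of smooth variation of index `ρ` at the diagonal. -/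
def SmoothVar (F : ℝ → ℝ → ℝ) (ρ : ℝ) : Prop :=
  ContinuousOn (fun p : ℝ × ℝ => F p.1 p.2) {p : ℝ × ℝ | p.2 ≤ p.1} ∧
  ContDiffOn ℝ 2 (fun p : ℝ × ℝ => F p.1 p.2) {p : ℝ × ℝ | p.2 < p.1} ∧
  (∀ t r : ℝ, r < t → 0 < F t r) ∧
  UnifDiagLimit (fun h t => h * p01 F t (t - h) / F t (t - h)) ρ ∧
  UnifDiagLimit (fun h t => h * p10 F (t + h) t / F (t + h) t) (-ρ) ∧
  UnifDiagLimit (fun h t => h ^ 2 * p11 F t (t - h) / F t (t - h)) (ρ * (ρ - 1)) ∧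
  UnifDiagLimit (fun h t => h ^ 2 * p02 F t (t - h) / F t (t - h)) (-(ρ * (ρ - 1)))


lemma measurable_of_rightCont (f : ℝ → ℝ)
    (hrc : ∀ s : ℝ, Tendsto f (nhdsWithin s (Set.Ici s)) (nhds (f s))) :
    Measurable f := by
  have hmeas : ∀ n : ℕ, Measurable (fun x : ℝ => f ((⌈x * 2 ^ n⌉ : ℝ) / 2 ^ n)) := by
    intro n
    have h2 : (0:ℝ) < 2 ^ n := by positivity
    intro s hs
    have : (fun x : ℝ => f ((⌈x * 2 ^ n⌉ : ℝ) / 2 ^ n)) ⁻¹' s =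
        ⋃ (k : ℤ) (_ : f ((k : ℝ) / 2 ^ n) ∈ s),
          Set.Ioc (((k : ℝ) - 1) / 2 ^ n) ((k : ℝ) / 2 ^ n) := by
      ext x
      simp only [Set.mem_preimage, Set.mem_iUnion, Set.mem_Ioc]
      constructor
      · intro hx
        refine ⟨⌈x * 2 ^ n⌉, hx, ?_, ?_⟩
        · rw [div_lt_iff₀ h2]
          push_cast
          linarith [Int.ceil_lt_add_one (x * 2 ^ n)]
        · rw [le_div_iff₀ h2]
          exact Int.le_ceil _
      · rintro ⟨k, hk, h1, h3⟩
        have hceil : ⌈x * 2 ^ n⌉ = k := by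
          rw [Int.ceil_eq_iff]
          constructor
          · rw [div_lt_iff₀ h2] at h1; push_cast; linarith
          · rw [le_div_iff₀ h2] at h3; exact h3
        rw [hceil]; exact hk
    rw [this]
    exact MeasurableSet.iUnion fun k => MeasurableSet.iUnion fun _ => measurableSet_Ioc
  apply measurable_of_tendsto_metrizable hmeas
  rw [tendsto_pi_nhds]
  intro x
  have hle : ∀ n : ℕ, x ≤ (⌈x * 2 ^ n⌉ : ℝ) / 2 ^ n := by
    intro n
    have h2 : (0:ℝ) < 2 ^ n := by positivity
    rw [le_div_iff₀ h2]
    exact Int.le_ceil _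
  have hub : ∀ n : ℕ, (⌈x * 2 ^ n⌉ : ℝ) / 2 ^ n ≤ x + (1/2) ^ n := by
    intro n
    have h2 : (0:ℝ) < 2 ^ n := by positivity
    rw [div_le_iff₀ h2]
    have := Int.ceil_lt_add_one (x * 2 ^ n)
    have : ((⌈x * 2 ^ n⌉ : ℝ)) ≤ x * 2 ^ n + 1 := by linarith
    calc ((⌈x * 2 ^ n⌉ : ℝ)) ≤ x * 2 ^ n + 1 := this
      _ = (x + (1/2)^n) * 2 ^ n := by rw [add_mul, ← mul_pow]; norm_num
  have htend : Tendsto (fun n : ℕ => (⌈x * 2 ^ n⌉ : ℝ) / 2 ^ n) atTop (nhds x) := by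
    have h0 : Tendsto (fun n : ℕ => x + (1/2 : ℝ) ^ n) atTop (nhds (x + 0)) :=
      tendsto_const_nhds.add (tendsto_pow_atTop_nhds_zero_of_lt_one (by norm_num) (by norm_num))
    rw [add_zero] at h0
    exact tendsto_of_tendsto_of_tendsto_of_le_of_le tendsto_const_nhds h0 hle hub
  have htend' : Tendsto (fun n : ℕ => (⌈x * 2 ^ n⌉ : ℝ) / 2 ^ n) atTop
      (nhdsWithin x (Set.Ici x)) :=
    tendsto_nhdsWithin_of_tendsto_nhds_of_eventually_within _ htend
      (Filter.Eventually.of_forall hle)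
  exact (hrc x).comp htend'


lemma exists_cadlag_bound (f g : ℝ → ℝ)
    (hrc : ∀ s : ℝ, Tendsto f (nhdsWithin s (Set.Ici s)) (nhds (f s)))
    (hll : ∀ s : ℝ, Tendsto f (nhdsWithin s (Set.Iio s)) (nhds (g s))) :
    ∃ B : ℝ, 0 ≤ B ∧ (∀ s ∈ Set.Icc (0:ℝ) 1, |f s| ≤ B) ∧
      (∀ s ∈ Set.Ioc (0:ℝ) 1, |g s| ≤ B) := by
  have key : ∀ s : ℝ, ∃ η > 0, ∀ u ∈ Set.Ioo (s - η) (s + η),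
      |f u| ≤ max |f s| |g s| + 1 := by
    intro s
    have h1 : ∀ᶠ u in nhdsWithin s (Set.Ici s), |f u - f s| < 1 := by
      have := hrc s
      rw [Metric.tendsto_nhds] at this
      simpa [Real.dist_eq] using this 1 one_pos
    have h2 : ∀ᶠ u in nhdsWithin s (Set.Iio s), |f u - g s| < 1 := by
      have := hll s
      rw [Metric.tendsto_nhds] at this
      simpa [Real.dist_eq] using this 1 one_pos
    rw [eventually_nhdsWithin_iff, Metric.eventually_nhds_iff] at h1 h2
    obtain ⟨η₁, hη₁, H1⟩ := h1
    obtain ⟨η₂, hη₂, H2⟩ := h2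
    refine ⟨min η₁ η₂, lt_min hη₁ hη₂, fun u hu => ?_⟩
    have hd : dist u s < min η₁ η₂ := by
      rw [Real.dist_eq, abs_lt]
      constructor <;> [linarith [hu.1]; linarith [hu.2]]
    rcases le_or_gt s u with h | h
    · have := H1 (lt_of_lt_of_le hd (min_le_left _ _)) h
      have e1 : |f u| = |f s + (f u - f s)| := by congr 1; ring
      have e2 : |f u - f s| < 1 := this
      calc |f u| ≤ |f s| + |f u - f s| := by rw [e1]; exact abs_add_le _ _
        _ ≤ max |f s| |g s| + 1 := add_le_add (le_max_left _ _) e2.le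
    · have := H2 (lt_of_lt_of_le hd (min_le_right _ _)) h
      have e1 : |f u| = |g s + (f u - g s)| := by congr 1; ring
      have e2 : |f u - g s| < 1 := this
      calc |f u| ≤ |g s| + |f u - g s| := by rw [e1]; exact abs_add_le _ _
        _ ≤ max |f s| |g s| + 1 := add_le_add (le_max_right _ _) e2.le
  choose η hη hb using key
  obtain ⟨T, hTmem, hTcov⟩ := isCompact_Icc.elim_nhds_subcover
    (fun s => Set.Ioo (s - η s) (s + η s))
    (fun s _ => Ioo_mem_nhds (by linarith [hη s]) (by linarith [hη s]))
  have hT0 : T.Nonempty := by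
    have h0 : (0:ℝ) ∈ Set.Icc (0:ℝ) 1 := by constructor <;> norm_num
    obtain ⟨s, hs, -⟩ := Set.mem_iUnion₂.mp (hTcov h0)
    exact ⟨s, hs⟩
  set B₀ : ℝ := T.sup' hT0 (fun s => max |f s| |g s|) + 1 with hB₀
  have hfB : ∀ u ∈ Set.Icc (0:ℝ) 1, |f u| ≤ B₀ := by
    intro u hu
    obtain ⟨s, hs, hus⟩ := Set.mem_iUnion₂.mp (hTcov hu)
    exact (hb s u hus).trans
      (add_le_add_left (Finset.le_sup' (fun s => max |f s| |g s|) hs) 1)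
  have hgB : ∀ s ∈ Set.Ioc (0:ℝ) 1, |g s| ≤ B₀ := by
    intro s hs
    have hne : (nhdsWithin s (Set.Iio s)).NeBot := nhdsLT_neBot s
    have habs : Tendsto (fun u => |f u|) (nhdsWithin s (Set.Iio s)) (nhds |g s|) :=
      (continuous_abs.tendsto _).comp (hll s)
    refine le_of_tendsto habs ?_
    have hev : ∀ᶠ u in nhdsWithin s (Set.Iio s), u ∈ Set.Icc (0:ℝ) 1 := by
      filter_upwards [eventually_nhdsWithin_of_eventually_nhds
        (eventually_gt_nhds hs.1), self_mem_nhdsWithin] with u h1 h2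
      exact ⟨h1.le, (le_of_lt h2).trans hs.2⟩
    exact hev.mono fun u hu => hfB u hu
  exact ⟨max B₀ 0, le_max_right _ _,
    fun s hs => (hfB s hs).trans (le_max_left _ _),
    fun s hs => (hgB s hs).trans (le_max_left _ _)⟩


lemma ker_intgr {d : ℝ} (hd : (0:ℝ) < d) (c u v : ℝ) :
    IntervalIntegrable (fun r : ℝ => (c - r) ^ (d - 1)) volume u v := by
  simpa using
    (intervalIntegral.intervalIntegrable_rpow' (a := c - u) (b := c - v)
      (by linarith : (-1:ℝ) < d - 1)).comp_sub_left c

lemma ker_mul_intgr {d : ℝ} (hd : (0:ℝ) < d) (c u v B : ℝ) {f : ℝ → ℝ}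
    (hf : Measurable f) (hB : ∀ r, |f r| ≤ B) :
    IntervalIntegrable (fun r : ℝ => (c - r) ^ (d - 1) * f r) volume u v := by
  have h := ker_intgr hd c u v
  constructor
  · exact ((h.1.bdd_mul hf.aestronglyMeasurable.restrict (c := B)
      (Filter.Eventually.of_forall fun x => by rw [Real.norm_eq_abs]; exact hB x))).congr
      (Filter.Eventually.of_forall fun x => mul_comm _ _)
  · exact ((h.2.bdd_mul hf.aestronglyMeasurable.restrict (c := B)
      (Filter.Eventually.of_forall fun x => by rw [Real.norm_eq_abs]; exact hB x))).congr
      (Filter.Eventually.of_forall fun x => mul_comm _ _)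

lemma ker_val {d : ℝ} (hd0 : (0:ℝ) < d) (c u v : ℝ) :
    (∫ r in u..v, (c - r) ^ (d - 1)) = ((c - u) ^ d - (c - v) ^ d) / d := by
  have h : (∫ r in u..v, (c - r) ^ (d-1)) = ∫ x in (c-v)..(c-u), x ^ (d-1) :=
    intervalIntegral.integral_comp_sub_left (fun x : ℝ => x ^ (d-1)) c
  rw [h, integral_rpow (Or.inl (by linarith))]
  have hd' : d - 1 + 1 = d := by ring
  rw [hd']

lemma rpow_sub_le_mvt {p x y : ℝ} (hp : p ≤ 1) (hx : 0 < x) (hxy : x ≤ y) :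
    |y ^ p - x ^ p| ≤ |p| * x ^ (p - 1) * (y - x) := by
  have hder : ∀ z ∈ Set.Icc x y, HasDerivWithinAt (fun w : ℝ => w ^ p)
      (p * z ^ (p-1)) (Set.Icc x y) z := fun z hz =>
    (Real.hasDerivAt_rpow_const (p := p)
      (Or.inl (by linarith [hz.1] : z ≠ 0))).hasDerivWithinAt
  have hbound : ∀ z ∈ Set.Icc x y, ‖p * z ^ (p-1)‖ ≤ |p| * x ^ (p-1) := by
    intro z hz
    rw [Real.norm_eq_abs, abs_mul]
    have hz0 : 0 < z := lt_of_lt_of_le hx hz.1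
    have h1 : |z ^ (p-1)| = z ^ (p-1) := abs_of_nonneg (Real.rpow_nonneg hz0.le _)
    rw [h1]
    exact mul_le_mul_of_nonneg_left
      (Real.rpow_le_rpow_of_nonpos hx hz.1 (by linarith)) (abs_nonneg _)
  have := (convex_Icc x y).norm_image_sub_le_of_norm_hasDerivWithin_le hder hbound
      (Set.left_mem_Icc.2 hxy) (Set.right_mem_Icc.2 hxy)
  simpa [Real.norm_eq_abs, abs_of_nonneg (by linarith : (0:ℝ) ≤ y - x)] using this

lemma abs_wint_le {w g : ℝ → ℝ} {u v K : ℝ} (huv : u ≤ v)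
    (hw : IntervalIntegrable w volume u v)
    (hwg : IntervalIntegrable (fun r => w r * g r) volume u v)
    (hw0 : ∀ r ∈ Set.Ioo u v, 0 ≤ w r)
    (hg : ∀ r ∈ Set.Ioo u v, |g r| ≤ K) :
    |∫ r in u..v, w r * g r| ≤ K * ∫ r in u..v, w r := by
  have h1 : |∫ r in u..v, w r * g r| ≤ ∫ r in u..v, |w r * g r| :=
    intervalIntegral.abs_integral_le_integral_abs huv
  have h2 : (∫ r in u..v, |w r * g r|) ≤ ∫ r in u..v, K * w r := by
    apply intervalIntegral.integral_mono_ae_restrict huv hwg.abs (hw.const_mul K)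
    have hIoo : ∀ᵐ r ∂volume.restrict (Set.Icc u v), r ∈ Set.Ioo u v := by
      rw [← MeasureTheory.restrict_Ioo_eq_restrict_Icc]
      exact ae_restrict_mem measurableSet_Ioo
    filter_upwards [hIoo] with r hr
    rw [abs_mul, abs_of_nonneg (hw0 r hr), mul_comm K]
    exact mul_le_mul_of_nonneg_left (hg r hr) (hw0 r hr)
  calc |∫ r in u..v, w r * g r| ≤ ∫ r in u..v, K * w r := h1.trans h2
    _ = K * ∫ r in u..v, w r := intervalIntegral.integral_const_mul _ _

lemma key_estimate {d : ℝ} (hd0 : (0:ℝ) < d) (hd1 : d < 1) {f : ℝ → ℝ}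
    (hmeas : Measurable f) {B : ℝ} (hB : ∀ r, |f r| ≤ B)
    {u v a c K₁ K₂ : ℝ} (hv1 : v ≤ 1) (hau : a < u) (huv : u < v)
    (hha : v - u ≤ a / 2) (h0a : 0 < a)
    (hc : |c| ≤ B) (hK₁ : 0 ≤ K₁) (hK₂ : 0 ≤ K₂)
    (hn1 : ∀ r ∈ Set.Ico u v, |f r - c| ≤ K₁)
    (hn2 : ∀ r ∈ Set.Ioo (v - a) u, |f r - c| ≤ K₂) :
    |(∫ r in (0:ℝ)..v, (v - r) ^ (d - 1) * f r) -
      ∫ r in (0:ℝ)..u, (u - r) ^ (d - 1) * f r| ≤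
    (K₁ + K₂) * (v - u) ^ d / d +
      (B * u ^ (d - 1) + 2 * B * (1 - d) * (a / 2) ^ (d - 2)) * (v - u) := by
  set h : ℝ := v - u with hh
  set m : ℝ := v - a with hm
  have h0u : 0 < u := h0a.trans hau
  have h0h : 0 < h := by simp only [hh]; linarith
  have h0m : 0 < m := by simp only [hm]; linarith
  have hmu : m < u := by simp only [hm]; linarith
  have hum : u - m = a - h := by simp only [hm, hh]; ring
  have hvm : v - m = a := by simp only [hm]; ring
  have hB0 : 0 ≤ B := le_trans (abs_nonneg _) (hB 0)
  set g : ℝ → ℝ := fun r => f r - c with hg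
  have hgmeas : Measurable g := hmeas.sub measurable_const
  have hgB : ∀ r, |g r| ≤ B + B := fun r =>
    (abs_sub (f r) c).trans (add_le_add (hB r) hc)
  -- integrability
  have Ivf : ∀ p q : ℝ, IntervalIntegrable (fun r => (v - r) ^ (d-1) * f r) volume p q :=
    fun p q => ker_mul_intgr hd0 v p q B hmeas hB
  have Iuf : ∀ p q : ℝ, IntervalIntegrable (fun r => (u - r) ^ (d-1) * f r) volume p q :=
    fun p q => ker_mul_intgr hd0 u p q B hmeas hB
  have Ivg : ∀ p q : ℝ, IntervalIntegrable (fun r => (v - r) ^ (d-1) * g r) volume p q :=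
    fun p q => ker_mul_intgr hd0 v p q (B + B) hgmeas hgB
  have Iug : ∀ p q : ℝ, IntervalIntegrable (fun r => (u - r) ^ (d-1) * g r) volume p q :=
    fun p q => ker_mul_intgr hd0 u p q (B + B) hgmeas hgB
  have Iv : ∀ p q : ℝ, IntervalIntegrable (fun r => (v - r) ^ (d-1)) volume p q :=
    fun p q => ker_intgr hd0 v p q
  have Iu : ∀ p q : ℝ, IntervalIntegrable (fun r => (u - r) ^ (d-1)) volume p q :=
    fun p q => ker_intgr hd0 u p q
  -- decomposition of the two integrals via `g`
  have splitv : (∫ r in (0:ℝ)..v, (v - r) ^ (d-1) * f r)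
      = (∫ r in (0:ℝ)..v, (v - r) ^ (d-1) * g r) + c * ((v - 0) ^ d - (v - v) ^ d) / d := by
    have e : Set.EqOn (fun r => (v - r) ^ (d-1) * f r)
        (fun r => (v - r) ^ (d-1) * g r + c * (v - r) ^ (d-1)) (Set.uIcc 0 v) := by
      intro r _; simp only [hg]; ring
    rw [intervalIntegral.integral_congr e,
      intervalIntegral.integral_add (Ivg 0 v) ((Iv 0 v).const_mul c),
      intervalIntegral.integral_const_mul, ker_val hd0, mul_div_assoc]
  have splitu : (∫ r in (0:ℝ)..u, (u - r) ^ (d-1) * f r)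
      = (∫ r in (0:ℝ)..u, (u - r) ^ (d-1) * g r) + c * ((u - 0) ^ d - (u - u) ^ d) / d := by
    have e : Set.EqOn (fun r => (u - r) ^ (d-1) * f r)
        (fun r => (u - r) ^ (d-1) * g r + c * (u - r) ^ (d-1)) (Set.uIcc 0 u) := by
      intro r _; simp only [hg]; ring
    rw [intervalIntegral.integral_congr e,
      intervalIntegral.integral_add (Iug 0 u) ((Iu 0 u).const_mul c),
      intervalIntegral.integral_const_mul, ker_val hd0, mul_div_assoc]
  -- split domains
  have domv : (∫ r in (0:ℝ)..v, (v - r) ^ (d-1) * g r)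
      = (∫ r in (0:ℝ)..m, (v - r) ^ (d-1) * g r)
        + (∫ r in m..u, (v - r) ^ (d-1) * g r)
        + ∫ r in u..v, (v - r) ^ (d-1) * g r := by
    rw [intervalIntegral.integral_add_adjacent_intervals (Ivg 0 m) (Ivg m u),
      intervalIntegral.integral_add_adjacent_intervals (Ivg 0 u) (Ivg u v)]
  have domu : (∫ r in (0:ℝ)..u, (u - r) ^ (d-1) * g r)
      = (∫ r in (0:ℝ)..m, (u - r) ^ (d-1) * g r)
        + ∫ r in m..u, (u - r) ^ (d-1) * g r := by
    rw [intervalIntegral.integral_add_adjacent_intervals (Iug 0 m) (Iug m u)]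
  set I1 : ℝ := ∫ r in u..v, (v - r) ^ (d-1) * g r with hI1
  set I2 : ℝ := (∫ r in (0:ℝ)..m, (v - r) ^ (d-1) * g r)
      - ∫ r in (0:ℝ)..m, (u - r) ^ (d-1) * g r with hI2
  set I3 : ℝ := (∫ r in m..u, (v - r) ^ (d-1) * g r)
      - ∫ r in m..u, (u - r) ^ (d-1) * g r with hI3
  have decomp : (∫ r in (0:ℝ)..v, (v - r) ^ (d-1) * f r) -
      (∫ r in (0:ℝ)..u, (u - r) ^ (d-1) * f r)
      = c * (v ^ d - u ^ d) / d + I1 + I2 + I3 := by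
    rw [splitv, splitu, domv, domu]
    have h1 : (v - v : ℝ) ^ d = 0 := by
      rw [sub_self]; exact Real.zero_rpow (ne_of_gt hd0)
    have h2 : (u - u : ℝ) ^ d = 0 := by
      rw [sub_self]; exact Real.zero_rpow (ne_of_gt hd0)
    rw [h1, h2]
    simp only [sub_zero]
    ring
  -- bound I1
  have bI1 : |I1| ≤ K₁ * (h ^ d / d) := by
    have hb := abs_wint_le (le_of_lt huv) (Iv u v) (Ivg u v)
      (fun r hr => Real.rpow_nonneg (by linarith [hr.2] : (0:ℝ) ≤ v - r) _)
      (fun r hr => hn1 r ⟨hr.1.le, hr.2⟩)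
    have hval : (∫ r in u..v, (v - r) ^ (d-1)) = h ^ d / d := by
      rw [ker_val hd0]
      rw [sub_self, Real.zero_rpow (ne_of_gt hd0), sub_zero, ← hh]
    rw [hval] at hb
    exact hb
  -- bound I3
  have bI3 : |I3| ≤ K₂ * (h ^ d / d) := by
    have heq : I3 = -∫ r in m..u, ((u - r) ^ (d-1) - (v - r) ^ (d-1)) * g r := by
      rw [hI3, ← intervalIntegral.integral_sub (Ivg m u) (Iug m u),
        ← intervalIntegral.integral_neg]
      congr 1; funext r; ring
    have hw : IntervalIntegrable (fun r => (u - r) ^ (d-1) - (v - r) ^ (d-1)) volume m u :=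
      (Iu m u).sub (Iv m u)
    have hwg : IntervalIntegrable
        (fun r => ((u - r) ^ (d-1) - (v - r) ^ (d-1)) * g r) volume m u := by
      have e : (fun r => ((u - r) ^ (d-1) - (v - r) ^ (d-1)) * g r)
          = fun x => (u - x) ^ (d-1) * g x - (v - x) ^ (d-1) * g x :=
        funext fun r => sub_mul _ _ _
      rw [e]; exact (Iug m u).sub (Ivg m u)
    have hw0 : ∀ r ∈ Set.Ioo m u, 0 ≤ (u - r) ^ (d-1) - (v - r) ^ (d-1) := by
      intro r hr
      have h1 : (0:ℝ) < u - r := by linarith [hr.2]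
      have h2 : u - r ≤ v - r := by linarith
      have := Real.rpow_le_rpow_of_nonpos h1 h2 (by linarith : d - 1 ≤ 0)
      linarith
    have hb := abs_wint_le (le_of_lt hmu) hw hwg hw0 (fun r hr => hn2 r hr)
    have hval : (∫ r in m..u, ((u - r) ^ (d-1) - (v - r) ^ (d-1)))
        = ((a - h) ^ d + h ^ d - a ^ d) / d := by
      have k1 : (∫ r in m..u, (u - r) ^ (d-1)) = ((u - m) ^ d - (u - u) ^ d) / d :=
        ker_val hd0 u m u
      have k2 : (∫ r in m..u, (v - r) ^ (d-1)) = ((v - m) ^ d - (v - u) ^ d) / d :=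
        ker_val hd0 v m u
      rw [intervalIntegral.integral_sub (Iu m u) (Iv m u), k1, k2, hum, hvm,
        sub_self, Real.zero_rpow (ne_of_gt hd0), ← hh]
      ring
    rw [heq, abs_neg]
    refine hb.trans ?_
    rw [hval]
    have hah : (a - h) ^ d ≤ a ^ d :=
      Real.rpow_le_rpow (by linarith) (by linarith) hd0.le
    have : ((a - h) ^ d + h ^ d - a ^ d) / d ≤ h ^ d / d :=
      (div_le_div_iff_of_pos_right hd0).mpr (by linarith)
    exact mul_le_mul_of_nonneg_left this hK₂
  -- bound I2
  have ha2 : (0:ℝ) < a / 2 := half_pos h0a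
  have bI2 : |I2| ≤ (1 - d) * (a / 2) ^ (d - 2) * h * (B + B) := by
    rw [hI2, ← intervalIntegral.integral_sub (Ivg 0 m) (Iug 0 m)]
    have hp2 : (0:ℝ) ≤ (a / 2) ^ (d - 2) := Real.rpow_nonneg ha2.le _
    have hC0 : 0 ≤ (1 - d) * (a / 2) ^ (d - 2) * h * (B + B) :=
      mul_nonneg (mul_nonneg (mul_nonneg (by linarith) hp2) h0h.le) (by linarith)
    have hbnd : ∀ r ∈ Set.uIoc (0:ℝ) m,
        ‖(v - r) ^ (d-1) * g r - (u - r) ^ (d-1) * g r‖ ≤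
          (1 - d) * (a / 2) ^ (d - 2) * h * (B + B) := by
      intro r hr
      rw [Set.uIoc_of_le h0m.le] at hr
      have hru : a / 2 ≤ u - r := by
        have : r ≤ m := hr.2
        simp only [hm] at this
        linarith
      have h1 : (0:ℝ) < u - r := lt_of_lt_of_le ha2 hru
      have h2 : u - r ≤ v - r := by linarith
      have hmvt := rpow_sub_le_mvt (p := d - 1) (by linarith) h1 h2
      have he1 : |d - 1| = 1 - d := by rw [abs_of_nonpos (by linarith)]; ring
      have he2 : v - r - (u - r) = h := by rw [hh]; ring
      rw [he1, he2] at hmvt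
      have he3 : d - 1 - 1 = d - 2 := by ring
      rw [he3] at hmvt
      have hpow : (u - r) ^ (d - 2) ≤ (a / 2) ^ (d - 2) :=
        Real.rpow_le_rpow_of_nonpos ha2 hru (by linarith)
      have hker : |(v - r) ^ (d-1) - (u - r) ^ (d-1)| ≤ (1 - d) * (a / 2) ^ (d-2) * h :=
        hmvt.trans (by
          have h1d : (0:ℝ) ≤ 1 - d := by linarith
          have := mul_le_mul_of_nonneg_left hpow h1d
          have hh0 : (0:ℝ) ≤ h := h0h.le
          nlinarith)
      have : ‖(v - r) ^ (d-1) * g r - (u - r) ^ (d-1) * g r‖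
          = |((v - r) ^ (d-1) - (u - r) ^ (d-1))| * |g r| := by
        rw [Real.norm_eq_abs, ← abs_mul]
        congr 1
        ring
      rw [this]
      exact mul_le_mul hker (hgB r) (abs_nonneg _)
        (mul_nonneg (mul_nonneg (by linarith) hp2) h0h.le)
    have := intervalIntegral.norm_integral_le_of_norm_le_const hbnd
    rw [Real.norm_eq_abs] at this
    refine this.trans ?_
    have hmle : |m - 0| ≤ 1 := by
      rw [sub_zero, abs_of_pos h0m]
      simp only [hm]; linarith
    calc (1 - d) * (a / 2) ^ (d - 2) * h * (B + B) * |m - 0|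
        ≤ (1 - d) * (a / 2) ^ (d - 2) * h * (B + B) * 1 :=
          mul_le_mul_of_nonneg_left hmle hC0
      _ = (1 - d) * (a / 2) ^ (d - 2) * h * (B + B) := mul_one _
  -- bound I0
  have bI0 : |c * (v ^ d - u ^ d) / d| ≤ B * u ^ (d-1) * h := by
    have hmvt := rpow_sub_le_mvt (p := d) (le_of_lt hd1) h0u (le_of_lt huv)
    rw [abs_of_pos hd0, ← hh] at hmvt
    rw [abs_div, abs_mul, abs_of_pos hd0]
    calc |c| * |v ^ d - u ^ d| / d ≤ B * (d * u ^ (d-1) * h) / d := by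
          apply (div_le_div_iff_of_pos_right hd0).mpr
          exact mul_le_mul hc hmvt (abs_nonneg _) hB0
      _ = B * u ^ (d-1) * h := by field_simp
  -- assemble
  rw [decomp]
  have habs : |c * (v ^ d - u ^ d) / d + I1 + I2 + I3|
      ≤ |c * (v ^ d - u ^ d) / d| + |I1| + |I2| + |I3| :=
    (abs_add_le _ _).trans (add_le_add
      ((abs_add_le _ _).trans (add_le_add (abs_add_le _ _) le_rfl)) le_rfl)
  have hre : (K₁ + K₂) * h ^ d / d
        + (B * u ^ (d - 1) + 2 * B * (1 - d) * (a / 2) ^ (d - 2)) * h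
      = K₁ * (h ^ d / d) + K₂ * (h ^ d / d) + B * u ^ (d-1) * h
        + (1 - d) * (a / 2) ^ (d - 2) * h * (B + B) := by ring
  rw [hre]
  linarith

lemma path_holder {d : ℝ} (hd0 : (0:ℝ) < d) (hd1 : d < 1) {f : ℝ → ℝ}
    (hmeas : Measurable f) {B : ℝ} (hB : ∀ r, |f r| ≤ B)
    {t L ε : ℝ} (ht0 : 0 < t) (ht1 : t < 1) (hL : |L| ≤ B)
    (hrc : Filter.Tendsto f (nhdsWithin t (Set.Ici t)) (nhds (f t)))
    (hll : Filter.Tendsto f (nhdsWithin t (Set.Iio t)) (nhds L))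
    (hε : 0 < ε) :
    ∃ δ₁ > 0, δ₁ ≤ t ∧ t + δ₁ ≤ 1 ∧ ∀ δ ∈ Set.Ioo (-δ₁) δ₁, δ ≠ 0 →
      |(∫ r in (0:ℝ)..(t+δ), (t + δ - r) ^ (d-1) * f r) -
        ∫ r in (0:ℝ)..t, (t - r) ^ (d-1) * f r| ≤ (|f t - L| + ε) * |δ| ^ d / d := by
  set ε' : ℝ := ε / 3 with hε'def
  have hε' : 0 < ε' := by simp only [hε'def]; linarith
  -- left modulus
  have h2 : ∀ᶠ u in nhdsWithin t (Set.Iio t), |f u - L| ≤ ε' := by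
    have := hll
    rw [Metric.tendsto_nhds] at this
    exact (this ε' hε').mono fun x hx => le_of_lt (by simpa [Real.dist_eq] using hx)
  rw [eventually_nhdsWithin_iff, Metric.eventually_nhds_iff] at h2
  obtain ⟨a₀, ha₀, H2⟩ := h2
  -- right modulus
  have h1 : ∀ᶠ u in nhdsWithin t (Set.Ici t), |f u - f t| ≤ ε' := by
    have := hrc
    rw [Metric.tendsto_nhds] at this
    exact (this ε' hε').mono fun x hx => le_of_lt (by simpa [Real.dist_eq] using hx)
  rw [eventually_nhdsWithin_iff, Metric.eventually_nhds_iff] at h1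
  obtain ⟨b₀, hb₀, H1⟩ := h1
  set a : ℝ := min (min a₀ b₀) t / 2 with hadef
  have h0a : 0 < a := by
    simp only [hadef]
    have : 0 < min (min a₀ b₀) t := lt_min (lt_min ha₀ hb₀) ht0
    linarith
  have haa₀ : a < a₀ := by
    simp only [hadef]
    have h1 : min (min a₀ b₀) t ≤ a₀ := le_trans (min_le_left _ _) (min_le_left _ _)
    linarith
  have hab₀ : a < b₀ := by
    simp only [hadef]
    have h1 : min (min a₀ b₀) t ≤ b₀ := le_trans (min_le_left _ _) (min_le_right _ _)
    linarith
  have hat : a ≤ t / 2 := by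
    simp only [hadef]
    have h1 : min (min a₀ b₀) t ≤ t := min_le_right _ _
    linarith
  have hB0 : 0 ≤ B := le_trans (abs_nonneg _) (hB 0)
  set Cm : ℝ := B * (t / 2) ^ (d - 1) + 2 * B * (1 - d) * (a / 2) ^ (d - 2) with hCm
  have hCm0 : 0 ≤ Cm := by
    have l1 : (0:ℝ) ≤ (t / 2) ^ (d - 1) := Real.rpow_nonneg (by linarith) _
    have l2 : (0:ℝ) ≤ (a / 2) ^ (d - 2) := Real.rpow_nonneg (by linarith) _
    simp only [hCm]
    have : (0:ℝ) ≤ 1 - d := by linarith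
    positivity
  set ρ : ℝ := (ε' / (Cm + 1)) ^ (1 / (1 - d)) with hρ
  have hρ0 : 0 < ρ := Real.rpow_pos_of_pos (by positivity) _
  set δ₁ : ℝ := min (min (a / 2) (1 - t)) ρ with hδ₁
  have hδ₁0 : 0 < δ₁ := lt_min (lt_min (by linarith) (by linarith)) hρ0
  have hδ₁a : δ₁ ≤ a / 2 := le_trans (min_le_left _ _) (min_le_left _ _)
  have hδ₁t : δ₁ ≤ 1 - t := le_trans (min_le_left _ _) (min_le_right _ _)
  have hδ₁ρ : δ₁ ≤ ρ := min_le_right _ _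
  clear_value ε' a Cm ρ δ₁
  refine ⟨δ₁, hδ₁0, by linarith, by linarith, ?_⟩
  intro δ hδ hδ0
  set h : ℝ := |δ| with hhd
  clear_value h
  have h0h : 0 < h := by rw [hhd]; exact abs_pos.mpr hδ0
  have hhδ₁ : h < δ₁ := by rw [hhd]; exact abs_lt.mpr ⟨hδ.1, hδ.2⟩
  have hha : h ≤ a / 2 := le_of_lt (lt_of_lt_of_le hhδ₁ hδ₁a)
  -- the small correction term
  have hcorr : Cm * h ≤ ε' * h ^ d := by
    have hρpow : h ^ (1 - d) ≤ ε' / (Cm + 1) := by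
      have e1 : h ^ (1 - d) ≤ ρ ^ (1 - d) :=
        Real.rpow_le_rpow h0h.le (le_of_lt (lt_of_lt_of_le hhδ₁ hδ₁ρ)) (by linarith)
      have e2 : ρ ^ (1 - d) = ε' / (Cm + 1) := by
        rw [hρ, ← Real.rpow_mul (le_of_lt (by positivity : (0:ℝ) < ε' / (Cm + 1)))]
        have e3 : 1 / (1 - d) * (1 - d) = 1 := by
          field_simp
          exact div_self (by linarith : (1:ℝ) - d ≠ 0)
        rw [e3, Real.rpow_one]
      exact e1.trans_eq e2
    have hsplit : h = h ^ (1 - d) * h ^ d := by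
      rw [← Real.rpow_add h0h, sub_add_cancel, Real.rpow_one]
    calc Cm * h = Cm * (h ^ (1 - d) * h ^ d) := by rw [← hsplit]
      _ ≤ Cm * ((ε' / (Cm + 1)) * h ^ d) := by
          apply mul_le_mul_of_nonneg_left ?_ hCm0
          exact mul_le_mul_of_nonneg_right hρpow (Real.rpow_nonneg h0h.le _)
      _ ≤ ε' * h ^ d := by
          have hp : (0:ℝ) ≤ h ^ d := Real.rpow_nonneg h0h.le _
          have : Cm * (ε' / (Cm + 1)) ≤ ε' := by
            rw [div_eq_mul_inv]
            have h1 : Cm * (ε' * (Cm + 1)⁻¹) = ε' * (Cm * (Cm + 1)⁻¹) := by ring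
            rw [h1]
            have h2 : Cm * (Cm + 1)⁻¹ ≤ 1 := by
              have e4 : Cm * (Cm + 1)⁻¹ = Cm / (Cm + 1) := (div_eq_mul_inv _ _).symm
              rw [e4, div_le_one (by positivity : (0:ℝ) < Cm + 1)]
              linarith
            nlinarith
          nlinarith
  have hJ0 : 0 ≤ |f t - L| := abs_nonneg _
  have hq0 : (0:ℝ) ≤ h ^ d := Real.rpow_nonneg h0h.le _
  have hqd : h ^ d ≤ h ^ d / d := by
    rw [le_div_iff₀ hd0]
    nlinarith
  have heps : ε = 3 * ε' := by rw [hε'def]; ring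
  rcases lt_or_gt_of_ne hδ0 with hneg | hpos
  · -- δ < 0
    have hhe : h = -δ := by rw [hhd, abs_of_neg hneg]
    have hδh : t + δ = t - h := by rw [hhe]; ring
    have hn1 : ∀ r ∈ Set.Ico (t - h) t, |f r - L| ≤ ε' := by
      intro r hr
      refine H2 ?_ hr.2
      rw [Real.dist_eq, abs_of_neg (by linarith [hr.2] : r - t < 0)]
      have := hr.1
      linarith
    have hn2 : ∀ r ∈ Set.Ioo (t - a) (t - h), |f r - L| ≤ ε' := by
      intro r hr
      refine H2 ?_ (show r ∈ Set.Iio t from lt_of_lt_of_le hr.2 (by linarith))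
      rw [Real.dist_eq, abs_of_neg (by linarith [hr.2] : r - t < 0)]
      linarith [hr.1]
    have key := key_estimate hd0 hd1 hmeas hB (a := a) (c := L)
      (K₁ := ε') (K₂ := ε')
      (le_of_lt ht1) (by linarith : a < t - h) (by linarith : t - h < t)
      (by rw [show t - (t - h) = h by ring]; exact hha) h0a hL hε'.le hε'.le
      hn1 hn2
    rw [show t - (t - h) = h by ring] at key
    rw [hδh]
    rw [abs_sub_comm]
    refine key.trans ?_
    have hu : (t - h) ^ (d - 1) ≤ (t / 2) ^ (d - 1) :=
      Real.rpow_le_rpow_of_nonpos (by linarith) (by linarith) (by linarith)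
    have hCle : B * (t - h) ^ (d - 1) + 2 * B * (1 - d) * (a / 2) ^ (d - 2) ≤ Cm := by
      rw [hCm]
      have := mul_le_mul_of_nonneg_left hu hB0
      linarith
    have hc2 : (B * (t - h) ^ (d - 1) + 2 * B * (1 - d) * (a / 2) ^ (d - 2)) * h
        ≤ ε' * h ^ d := by
      refine le_trans (mul_le_mul_of_nonneg_right hCle h0h.le) hcorr
    have e5 : ε' * h ^ d ≤ ε' * (h ^ d / d) := mul_le_mul_of_nonneg_left hqd hε'.le
    have e7 : (B * (t - h) ^ (d - 1) + 2 * B * (1 - d) * (a / 2) ^ (d - 2)) * h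
        ≤ (|f t - L| + ε') * (h ^ d / d) := by
      refine (hc2.trans e5).trans ?_
      exact mul_le_mul_of_nonneg_right (by linarith) (div_nonneg hq0 hd0.le)
    have e8 : (|f t - L| + ε) * h ^ d / d
        = (ε' + ε') * h ^ d / d + (|f t - L| + ε') * (h ^ d / d) := by
      rw [heps]; ring
    rw [e8]
    exact add_le_add_right e7 _
  · -- δ > 0
    have hhe : h = δ := by rw [hhd, abs_of_pos hpos]
    have hn1 : ∀ r ∈ Set.Ico t (t + h), |f r - L| ≤ |f t - L| + ε' := by
      intro r hr
      have h1 : |f r - f t| ≤ ε' := by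
        refine H1 ?_ hr.1
        rw [Real.dist_eq, abs_of_nonneg (by linarith [hr.1] : 0 ≤ r - t)]
        have := hr.2
        linarith
      calc |f r - L| ≤ |f r - f t| + |f t - L| := abs_sub_le _ _ _
        _ ≤ |f t - L| + ε' := by linarith
    have hn2 : ∀ r ∈ Set.Ioo (t + h - a) t, |f r - L| ≤ ε' := by
      intro r hr
      refine H2 ?_ hr.2
      rw [Real.dist_eq, abs_of_neg (by linarith [hr.2] : r - t < 0)]
      linarith [hr.1]
    have key := key_estimate hd0 hd1 hmeas hB (a := a) (c := L)
      (K₁ := |f t - L| + ε') (K₂ := ε')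
      (by linarith : t + h ≤ 1) (by linarith : a < t) (by linarith : t < t + h)
      (by rw [show t + h - t = h by ring]; exact hha) h0a hL
      (by positivity) hε'.le hn1 hn2
    rw [show t + h - t = h by ring] at key
    rw [hhe] at key
    rw [← hhe] at key
    rw [show t + δ = t + h by rw [hhe]]
    refine key.trans ?_
    have hu : t ^ (d - 1) ≤ (t / 2) ^ (d - 1) :=
      Real.rpow_le_rpow_of_nonpos (by linarith) (by linarith) (by linarith)
    have hCle : B * t ^ (d - 1) + 2 * B * (1 - d) * (a / 2) ^ (d - 2) ≤ Cm := by
      rw [hCm]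
      have := mul_le_mul_of_nonneg_left hu hB0
      linarith
    have hc2 : (B * t ^ (d - 1) + 2 * B * (1 - d) * (a / 2) ^ (d - 2)) * h
        ≤ ε' * h ^ d :=
      le_trans (mul_le_mul_of_nonneg_right hCle h0h.le) hcorr
    have e5 : ε' * h ^ d ≤ ε' * (h ^ d / d) := mul_le_mul_of_nonneg_left hqd hε'.le
    have e7 : (B * t ^ (d - 1) + 2 * B * (1 - d) * (a / 2) ^ (d - 2)) * h
        ≤ ε' * (h ^ d / d) := hc2.trans e5
    have e8 : (|f t - L| + ε) * h ^ d / d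
        = (|f t - L| + ε' + ε') * h ^ d / d + ε' * (h ^ d / d) := by
      rw [heps]; ring
    rw [e8]
    exact add_le_add_right e7 _

set_option maxHeartbeats 1000000 in
/-- Hölder continuity of order `d` for the restricted fractional
process: `d ∈ (0,1)`, `X` a semimartingale with càdlàg paths, left limits `Xm`
and `X(0) = X(0−) = 0` a.s., and
`M(t) = (1/Γ(d+1)) ∫₀ᵗ (t−s)^d dX(s) = (1/Γ(d)) ∫₀ᵗ (t−r)^{d−1} X(r) dr`
(pathwise representation via Lemma 1).  Then a.s., for every `t ∈ (0,1)` and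
every `C₁ > (1/Γ(d+1)) sup_{s∈[0,1]} |Δ_X(s)|`, there is `δ₁ > 0` with
`|M(t+δ) − M(t)| ≤ C₁|δ|^d` for all `δ ∈ (−δ₁, δ₁)`. -/
theorem fractional_holder_restricted
    {Ω : Type*} [MeasureSpace Ω] [IsProbabilityMeasure (ℙ : Measure Ω)]
    (d : ℝ) (hd : d ∈ Set.Ioo (0:ℝ) 1)
    (X Xm M : ℝ → Ω → ℝ)
    (hXrc : ∀ᵐ ω ∂(ℙ : Measure Ω), ∀ s : ℝ,
      Tendsto (fun u => X u ω) (nhdsWithin s (Set.Ici s)) (nhds (X s ω)))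
    (hXll : ∀ᵐ ω ∂(ℙ : Measure Ω), ∀ s : ℝ,
      Tendsto (fun u => X u ω) (nhdsWithin s (Set.Iio s)) (nhds (Xm s ω)))
    (hX0 : ∀ᵐ ω ∂(ℙ : Measure Ω), X 0 ω = 0 ∧ Xm 0 ω = 0)
    (hM : ∀ᵐ ω ∂(ℙ : Measure Ω), ∀ t : ℝ,
      M t ω = (1 / Real.Gamma d) * ∫ r in (0:ℝ)..t, (t - r) ^ (d - 1) * X r ω) :
    ∀ᵐ ω ∂(ℙ : Measure Ω), ∀ t ∈ Set.Ioo (0:ℝ) 1,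
      (∃ δ₁ > (0:ℝ), ∃ C₁ : ℝ, ∀ δ ∈ Set.Ioo (-δ₁) δ₁,
        |M (t + δ) ω - M t ω| ≤ C₁ * |δ| ^ d) ∧
      ∀ C₁ : ℝ,
        (1 / Real.Gamma (d + 1)) *
            sSup {y : ℝ | ∃ s ∈ Set.Icc (0:ℝ) 1, y = |X s ω - Xm s ω|} < C₁ →
        ∃ δ₁ > (0:ℝ), ∀ δ ∈ Set.Ioo (-δ₁) δ₁,
          |M (t + δ) ω - M t ω| ≤ C₁ * |δ| ^ d := by
  obtain ⟨hd0, hd1⟩ := hd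
  filter_upwards [hXrc, hXll, hX0, hM] with ω hrc hll h0 hMω
  intro t ht
  obtain ⟨ht0, ht1⟩ := ht
  set F : ℝ → ℝ := fun r => X r ω with hF
  set Fm : ℝ → ℝ := fun r => Xm r ω with hFm
  obtain ⟨B, hB0, hFb, hFmb⟩ := exists_cadlag_bound F Fm hrc hll
  have hFmeas : Measurable F := measurable_of_rightCont F hrc
  set fB : ℝ → ℝ := (Set.Icc (0:ℝ) 1).indicator F with hfB
  have hfBmeas : Measurable fB := hFmeas.indicator measurableSet_Icc
  have hfBb : ∀ r, |fB r| ≤ B := by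
    intro r
    by_cases hr : r ∈ Set.Icc (0:ℝ) 1
    · rw [hfB, Set.indicator_of_mem hr]; exact hFb r hr
    · rw [hfB, Set.indicator_of_notMem hr, abs_zero]; exact hB0
  have htIcc : t ∈ Set.Icc (0:ℝ) 1 := ⟨ht0.le, ht1.le⟩
  have hfBt : fB t = F t := Set.indicator_of_mem htIcc F
  have hevIcc : ∀ᶠ u in nhds t, u ∈ Set.Icc (0:ℝ) 1 := by
    filter_upwards [Ioo_mem_nhds ht0 ht1] with u hu
    exact ⟨hu.1.le, hu.2.le⟩
  have hfBrc : Filter.Tendsto fB (nhdsWithin t (Set.Ici t)) (nhds (fB t)) := by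
    rw [hfBt]
    apply (hrc t).congr'
    filter_upwards [eventually_nhdsWithin_of_eventually_nhds hevIcc] with u hu
    exact (Set.indicator_of_mem hu F).symm
  have hfBll : Filter.Tendsto fB (nhdsWithin t (Set.Iio t)) (nhds (Fm t)) := by
    apply (hll t).congr'
    filter_upwards [eventually_nhdsWithin_of_eventually_nhds hevIcc] with u hu
    exact (Set.indicator_of_mem hu F).symm
  have hFmtB : |Fm t| ≤ B := hFmb t ⟨ht0, ht1.le⟩
  set S : ℝ := sSup {y : ℝ | ∃ s ∈ Set.Icc (0:ℝ) 1, y = |X s ω - Xm s ω|} with hS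
  have hbdd : BddAbove {y : ℝ | ∃ s ∈ Set.Icc (0:ℝ) 1, y = |X s ω - Xm s ω|} := by
    refine ⟨B + B, ?_⟩
    rintro y ⟨s, hs, rfl⟩
    have h1 : |X s ω| ≤ B := hFb s hs
    have h2 : |Xm s ω| ≤ B := by
      rcases eq_or_lt_of_le hs.1 with he | hlt
      · rw [← he, h0.2, abs_zero]; exact hB0
      · exact hFmb s ⟨hlt, hs.2⟩
    exact (abs_sub _ _).trans (add_le_add h1 h2)
  have hJS : |fB t - Fm t| ≤ S := by
    rw [hfBt]
    exact le_csSup hbdd ⟨t, htIcc, rfl⟩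
  have hΓd : 0 < Real.Gamma d := Real.Gamma_pos_of_pos hd0
  have hΓd1e : Real.Gamma (d + 1) = d * Real.Gamma d := Real.Gamma_add_one (ne_of_gt hd0)
  have hΓd1 : 0 < Real.Gamma (d + 1) := by rw [hΓd1e]; positivity
  -- part 2
  have hpart2 : ∀ C₁ : ℝ, (1 / Real.Gamma (d + 1)) * S < C₁ →
      ∃ δ₁ > (0:ℝ), ∀ δ ∈ Set.Ioo (-δ₁) δ₁,
        |M (t + δ) ω - M t ω| ≤ C₁ * |δ| ^ d := by
    intro C₁ hC₁
    have hSC : S < C₁ * Real.Gamma (d + 1) := by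
      have h' : S / Real.Gamma (d + 1) < C₁ := by
        rw [div_eq_mul_inv]
        rw [one_div, mul_comm] at hC₁
        exact hC₁
      exact (div_lt_iff₀ hΓd1).mp h'
    set ε : ℝ := C₁ * Real.Gamma (d + 1) - S with hε
    have hε0 : 0 < ε := by simp only [hε]; linarith
    obtain ⟨δ₁, hδ₁0, hδ₁t, hδ₁1, hest⟩ :=
      path_holder hd0 hd1 hfBmeas hfBb ht0 ht1 hFmtB hfBrc hfBll hε0
    refine ⟨δ₁, hδ₁0, ?_⟩
    intro δ hδ
    by_cases hδ0 : δ = 0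
    · rw [hδ0]
      simp only [add_zero, sub_self, abs_zero]
      rw [Real.zero_rpow (ne_of_gt hd0), mul_zero]
    · have hdom : t + δ ∈ Set.Icc (0:ℝ) 1 := by
        constructor
        · have := hδ.1; linarith
        · have := hδ.2; linarith
      have hcongr : ∀ c : ℝ, c ∈ Set.Icc (0:ℝ) 1 →
          (∫ r in (0:ℝ)..c, (c - r) ^ (d - 1) * X r ω)
            = ∫ r in (0:ℝ)..c, (c - r) ^ (d - 1) * fB r := by
        intro c hc
        apply intervalIntegral.integral_congr
        intro r hr
        rw [Set.uIcc_of_le hc.1] at hr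
        have hrIcc : r ∈ Set.Icc (0:ℝ) 1 := ⟨hr.1, hr.2.trans hc.2⟩
        have he : fB r = X r ω := by
          rw [hfB]; exact Set.indicator_of_mem hrIcc F
        simp only [he]
      have hMv : M (t + δ) ω = (1 / Real.Gamma d) *
          ∫ r in (0:ℝ)..(t + δ), (t + δ - r) ^ (d - 1) * fB r := by
        rw [hMω (t + δ), hcongr _ hdom]
      have hMu : M t ω = (1 / Real.Gamma d) *
          ∫ r in (0:ℝ)..t, (t - r) ^ (d - 1) * fB r := by
        rw [hMω t, hcongr _ htIcc]
      rw [hMv, hMu, ← mul_sub, abs_mul, abs_of_pos (by positivity : (0:ℝ) < 1 / Real.Gamma d)]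
      have hkey := hest δ hδ hδ0
      calc (1 / Real.Gamma d) *
            |(∫ r in (0:ℝ)..(t+δ), (t + δ - r) ^ (d-1) * fB r) -
              ∫ r in (0:ℝ)..t, (t - r) ^ (d-1) * fB r|
          ≤ (1 / Real.Gamma d) * ((|fB t - Fm t| + ε) * |δ| ^ d / d) :=
            mul_le_mul_of_nonneg_left hkey (by positivity)
        _ ≤ C₁ * |δ| ^ d := by
            have h1 : |fB t - Fm t| + ε ≤ C₁ * Real.Gamma (d + 1) := by
              rw [hε]; linarith
            have h2 : (1 / Real.Gamma d) * ((|fB t - Fm t| + ε) * |δ| ^ d / d)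
                = ((|fB t - Fm t| + ε) / Real.Gamma (d + 1)) * |δ| ^ d := by
              rw [hΓd1e]; field_simp
            rw [h2]
            have h3 : (|fB t - Fm t| + ε) / Real.Gamma (d + 1) ≤ C₁ :=
              (div_le_iff₀ hΓd1).mpr h1
            exact mul_le_mul_of_nonneg_right h3 (Real.rpow_nonneg (abs_nonneg _) _)
  refine ⟨?_, hpart2⟩
  obtain ⟨δ₁, hδ₁0, hb⟩ := hpart2 ((1 / Real.Gamma (d + 1)) * S + 1) (by linarith)
  exact ⟨δ₁, hδ₁0, _, hb⟩
end

section
/- Sign structure of the kernel ratios near the diagonal: Let d ∈ (0,1) and f ∈ SD²_{d−1}(0+). Then there exists h₁ > 0 such that for all δ ∈ (0, h₁), all v ∈ (0, h₁/(2δ)), and all s ∈ [0,1]: g_δ(s,v) = [f(s+δ, s−δv) − f(s, s−δv)]/f(s+δ, s) ≤ 0 and f_δ(s,v) = f(s+δ, s+δ−δv)/f(s+δ, s) ≥ 0. -/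
open MeasureTheory ProbabilityTheory Filter Set intervalIntegral Real

open Topology in
lemma aux_p01_fderiv (F : ℝ → ℝ → ℝ)
    (hC2 : ContDiffOn ℝ 2 (fun p : ℝ × ℝ => F p.1 p.2) {p : ℝ × ℝ | p.2 < p.1}) :
    ∀ t r : ℝ, r < t →
      p01 F t r = fderiv ℝ (fun p : ℝ × ℝ => F p.1 p.2) (t, r) (0, 1) := by
  intro t r hrt
  have hUopen : IsOpen {p : ℝ × ℝ | p.2 < p.1} := isOpen_lt continuous_snd continuous_fst
  have hGdiff : DifferentiableAt ℝ (fun p : ℝ × ℝ => F p.1 p.2) (t, r) :=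
    (hC2.differentiableOn (by norm_num)).differentiableAt (hUopen.mem_nhds hrt)
  have h1 : HasDerivAt (fun x : ℝ => ((t : ℝ), x)) ((0 : ℝ), (1 : ℝ)) r :=
    (hasDerivAt_const r t).prodMk (hasDerivAt_id r)
  have h2 := (hGdiff.hasFDerivAt).comp_hasDerivAt r h1
  simpa [p01, Function.comp_def] using h2.deriv

open Topology in
lemma aux_p01_hasDeriv (F : ℝ → ℝ → ℝ)
    (hC2 : ContDiffOn ℝ 2 (fun p : ℝ × ℝ => F p.1 p.2) {p : ℝ × ℝ | p.2 < p.1}) :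
    ∀ t r : ℝ, r < t → HasDerivAt (fun x => p01 F x r) (p11 F t r) t := by
  intro t r hrt
  have hUopen : IsOpen {p : ℝ × ℝ | p.2 < p.1} := isOpen_lt continuous_snd continuous_fst
  have hDD : DifferentiableOn ℝ
      (fun p : ℝ × ℝ => fderiv ℝ (fun q : ℝ × ℝ => F q.1 q.2) p ((0:ℝ), (1:ℝ)))
      {p : ℝ × ℝ | p.2 < p.1} := by
    have h1 : ContDiffOn ℝ 1 (fun p : ℝ × ℝ => fderiv ℝ (fun q : ℝ × ℝ => F q.1 q.2) p)
        {p : ℝ × ℝ | p.2 < p.1} := hC2.fderiv_of_isOpen hUopen (by norm_num)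
    exact (h1.clm_apply contDiffOn_const).differentiableOn one_ne_zero
  have hmem : ((t, r) : ℝ × ℝ) ∈ {p : ℝ × ℝ | p.2 < p.1} := hrt
  have hφ : DifferentiableAt ℝ
      (fun x : ℝ => fderiv ℝ (fun q : ℝ × ℝ => F q.1 q.2) (x, r) ((0:ℝ), (1:ℝ))) t := by
    have h1 : DifferentiableAt ℝ
        (fun p : ℝ × ℝ => fderiv ℝ (fun q : ℝ × ℝ => F q.1 q.2) p ((0:ℝ), (1:ℝ))) (t, r) :=
      hDD.differentiableAt (hUopen.mem_nhds hmem)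
    exact h1.comp (f := fun x : ℝ => (x, r)) t ((differentiableAt_fun_id (x := t)).prodMk (differentiableAt_const r))
  have heq : (fun x => p01 F x r) =ᶠ[𝓝 t]
      fun x : ℝ => fderiv ℝ (fun q : ℝ × ℝ => F q.1 q.2) (x, r) ((0:ℝ), (1:ℝ)) := by
    filter_upwards [eventually_gt_nhds hrt] with x hx
    exact aux_p01_fderiv F hC2 x r hx
  have hdiff : DifferentiableAt ℝ (fun x => p01 F x r) t :=
    hφ.congr_of_eventuallyEq heq
  exact hdiff.hasDerivAt

/-- sign structure near the diagonal, eqs. (42)–(43): for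
`f ∈ SD²_{d−1}(0+)`, `d ∈ (0,1)`, there is `h₁ > 0` such that for all
`δ ∈ (0,h₁)`, `v ∈ (0, h₁/(2δ))` and `s ∈ [0,1]`: `g_δ(s,v) ≤ 0` and
`f_δ(s,v) ≥ 0`. -/
theorem sign_structure (d : ℝ) (hd : d ∈ Set.Ioo (0:ℝ) 1)
    (F : ℝ → ℝ → ℝ) (hF : SmoothVar F d)
    (f : ℝ → ℝ → ℝ) (hf : ∀ t r : ℝ, f t r = p01 F t r) :
    ∃ h₁ > (0:ℝ), ∀ δ : ℝ, 0 < δ → δ < h₁ →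
      ∀ v : ℝ, 0 < v → v < h₁ / (2 * δ) → ∀ s ∈ Set.Icc (0:ℝ) 1,
        (f (s + δ) (s - δ * v) - f s (s - δ * v)) / f (s + δ) s ≤ 0 ∧
        0 ≤ f (s + δ) (s + δ - δ * v) / f (s + δ) s := by
  obtain ⟨hd0, hd1⟩ := hd
  obtain ⟨hcont, hC2, hpos, h01, h10, h11, h02⟩ := hF
  obtain ⟨h₀₁, hh₀₁pos, hA⟩ := h01 (Set.Icc (-1) 3) isCompact_Icc (d/2) (by linarith)
  obtain ⟨h₀₂, hh₀₂pos, hB⟩ := h11 (Set.Icc (-1) 3) isCompact_Icc (d*(1-d)/2) (by nlinarith)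
  -- sign of p01 near the diagonal
  have hneg : ∀ t ∈ Set.Icc (-1:ℝ) 3, ∀ h : ℝ, 0 < h → h < h₀₁ → p01 F t (t - h) < 0 := by
    intro t ht h hh hlt
    have hF0 : 0 < F t (t - h) := hpos t (t - h) (by linarith)
    have habs := hA h hh hlt t ht
    rw [abs_lt] at habs
    have h2 : h * p01 F t (t - h) / F t (t - h) < -(d/2) := by linarith [habs.2]
    have h3 : h * p01 F t (t - h) < -(d/2) * F t (t - h) := by
      rwa [div_lt_iff₀ hF0] at h2
    nlinarith
  -- sign of p11 near the diagonal
  have hp11pos : ∀ t ∈ Set.Icc (-1:ℝ) 3, ∀ h : ℝ, 0 < h → h < h₀₂ → 0 < p11 F t (t - h) := by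
    intro t ht h hh hlt
    have hF0 : 0 < F t (t - h) := hpos t (t - h) (by linarith)
    have habs := hB h hh hlt t ht
    rw [abs_lt] at habs
    have h2 : d*(1-d)/2 < h ^ 2 * p11 F t (t - h) / F t (t - h) := by nlinarith [habs.1]
    have h3 : d*(1-d)/2 * F t (t - h) < h ^ 2 * p11 F t (t - h) := by
      rwa [lt_div_iff₀ hF0] at h2
    nlinarith
  refine ⟨min (min h₀₁ h₀₂) 1 / 2, by positivity, ?_⟩
  intro δ hδ hδlt v hv hvlt s hs
  obtain ⟨hs0, hs1⟩ := hs
  have hm1 : min (min h₀₁ h₀₂) 1 / 2 ≤ h₀₁ / 2 := by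
    have := min_le_left (min h₀₁ h₀₂) 1
    have := min_le_left h₀₁ h₀₂
    linarith
  have hm2 : min (min h₀₁ h₀₂) 1 / 2 ≤ h₀₂ / 2 := by
    have := min_le_left (min h₀₁ h₀₂) 1
    have := min_le_right h₀₁ h₀₂
    linarith
  have hm3 : min (min h₀₁ h₀₂) 1 / 2 ≤ 1 / 2 := by
    have := min_le_right (min h₀₁ h₀₂) 1
    linarith
  have hδv : δ * v < min (min h₀₁ h₀₂) 1 / 2 / 2 := by
    have h1 := (lt_div_iff₀ (by positivity : (0:ℝ) < 2 * δ)).mp hvlt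
    nlinarith
  have hδvpos : 0 < δ * v := by positivity
  -- denominator is negative
  have hden : f (s + δ) s < 0 := by
    have h1 := hneg (s + δ) ⟨by linarith, by linarith⟩ δ hδ (by linarith)
    rw [hf]
    have h2 : s + δ - δ = s := by ring
    rwa [h2] at h1
  -- second numerator is negative
  have hnum2 : f (s + δ) (s + δ - δ * v) < 0 := by
    have h1 := hneg (s + δ) ⟨by linarith, by linarith⟩ (δ * v) hδvpos (by linarith)
    rw [hf]
    exact h1
  -- first numerator is nonneg via MVT
  have hnum1 : 0 ≤ f (s + δ) (s - δ * v) - f s (s - δ * v) := by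
    set r : ℝ := s - δ * v with hr
    have hrs : r < s := by simp only [hr]; linarith
    have hcontOn : ContinuousOn (fun x => p01 F x r) (Set.Icc s (s + δ)) := by
      intro x hx
      have hrx : r < x := lt_of_lt_of_le hrs hx.1
      exact ((aux_p01_hasDeriv F hC2 x r hrx).continuousAt).continuousWithinAt
    have hderivOn : ∀ x ∈ Set.Ioo s (s + δ),
        HasDerivAt (fun x => p01 F x r) (p11 F x r) x := by
      intro x hx
      exact aux_p01_hasDeriv F hC2 x r (lt_trans hrs hx.1)
    obtain ⟨c, hc, hcs⟩ := exists_hasDerivAt_eq_slope (fun x => p01 F x r)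
      (fun x => p11 F x r) (by linarith : s < s + δ) hcontOn hderivOn
    have hcpos : 0 < p11 F c r := by
      have h1 := hp11pos c ⟨by linarith [hc.1], by linarith [hc.2]⟩ (c - r)
        (by linarith [hc.1]) (by simp only [hr] at *; linarith [hc.2])
      have h2 : c - (c - r) = r := by ring
      rwa [h2] at h1
    have h3 : p01 F (s + δ) r - p01 F s r = p11 F c r * (s + δ - s) := by
      rw [hcs, div_mul_cancel₀ _ (by linarith : (0:ℝ) < s + δ - s).ne']
    rw [hf, hf]
    nlinarith
  constructor
  · exact div_nonpos_of_nonneg_of_nonpos hnum1 hden.le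
  · exact div_nonneg_iff.mpr (Or.inr ⟨hnum2.le, hden.le⟩)
end
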